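/- arXiv:2305.11514 — 2 statements merged into one kernel-verified Lean document; each statement's English description precedes it below -/
import Mathlib

section
/- If u is a polynomial curve Y_τ = y₀(1-τ) + y₁τ and H : ℝ^d → ℝ is continuously differentiable, then H(y₁) - H(y₀) = ∫₀¹ ∇H(Y_τ)ᵀ (y₁ - y₀) dτ. Consequently, for the AVF method y₁ = y₀ + h S ∫₀¹ ∇H((1-τ)y₀ + τy₁) dτ with S skew-symmetric constant, H(y₁) = H(y₀). -/
open Matrix

theorem avf_energy_preserving
    (d : ℕ) (S : Matrix (Fin d) (Fin d) ℝ) (hS : Sᵀ = -S)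
    (H : (Fin d → ℝ) → ℝ) (hH : ContDiff ℝ 1 H)
    (gradH : (Fin d → ℝ) → (Fin d → ℝ))
    (hgrad : ∀ x, gradH x = fun i => fderiv ℝ H x (Pi.single i 1))
    (h : ℝ) (y₀ y₁ : Fin d → ℝ)
    (hAVF : y₁ = y₀ + h • (S *ᵥ ∫ τ in (0:ℝ)..1, gradH ((1 - τ) • y₀ + τ • y₁))) :
    (H y₁ - H y₀ = ∫ τ in (0:ℝ)..1, gradH ((1 - τ) • y₀ + τ • y₁) ⬝ᵥ (y₁ - y₀)) ∧
    H y₁ = H y₀ := by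
  set γ : ℝ → (Fin d → ℝ) := fun τ => (1 - τ) • y₀ + τ • y₁ with hγ
  have hγderiv : ∀ τ : ℝ, HasDerivAt γ (y₁ - y₀) τ := by
    intro τ
    have h1 : HasDerivAt (fun τ : ℝ => (1 - τ) • y₀) ((-1 : ℝ) • y₀) τ :=
      ((hasDerivAt_id τ).const_sub 1).smul_const y₀
    have h2 : HasDerivAt (fun τ : ℝ => τ • y₁) ((1 : ℝ) • y₁) τ :=
      (hasDerivAt_id τ).smul_const y₁
    refine (h1.add h2).congr_deriv ?_
    module
  have hγcont : Continuous γ := by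
    fun_prop
  have hfderiv_cont : Continuous (fderiv ℝ H) := hH.continuous_fderiv one_ne_zero
  -- fderiv applied to vector = gradH dot
  have hkey : ∀ (x : Fin d → ℝ) (v : Fin d → ℝ),
      fderiv ℝ H x v = gradH x ⬝ᵥ v := by
    intro x v
    rw [hgrad]
    have hv2 : v = ∑ i, v i • (Pi.single i 1 : Fin d → ℝ) := by
      funext j
      simp [Finset.sum_apply, Pi.single_apply]
    conv_lhs => rw [hv2]
    rw [map_sum]
    simp [dotProduct, mul_comm]
  -- derivative of H ∘ γ
  have hderiv : ∀ τ : ℝ, HasDerivAt (fun t => H (γ t))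
      (gradH (γ τ) ⬝ᵥ (y₁ - y₀)) τ := by
    intro τ
    have := (hH.differentiable one_ne_zero (γ τ)).hasFDerivAt.comp_hasDerivAt τ (hγderiv τ)
    rw [hkey] at this
    exact this
  have hcontInt : Continuous (fun τ => gradH (γ τ) ⬝ᵥ (y₁ - y₀)) := by
    have : Continuous fun τ => fderiv ℝ H (γ τ) (y₁ - y₀) := by
      exact (ContinuousLinearMap.apply ℝ ℝ (y₁ - y₀)).continuous.comp
        (hfderiv_cont.comp hγcont)
    simpa [hkey] using this
  have hgradcont : Continuous (fun τ => gradH (γ τ)) := by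
    have : Continuous fun τ => (fderiv ℝ H (γ τ) : (Fin d → ℝ) →L[ℝ] ℝ) :=
      hfderiv_cont.comp hγcont
    have h2 : ∀ i, Continuous fun τ => gradH (γ τ) i := by
      intro i
      have := (ContinuousLinearMap.apply ℝ ℝ (Pi.single i (1:ℝ))).continuous.comp this
      simpa [hgrad, Function.comp_def] using this
    exact continuous_pi h2
  have hFTC : H (γ 1) - H (γ 0) = ∫ τ in (0:ℝ)..1, gradH (γ τ) ⬝ᵥ (y₁ - y₀) := by
    rw [intervalIntegral.integral_eq_sub_of_hasDerivAt (fun τ _ => hderiv τ)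
      (hcontInt.intervalIntegrable 0 1)]
  have hγ0 : γ 0 = y₀ := by simp [hγ]
  have hγ1 : γ 1 = y₁ := by simp [hγ]
  rw [hγ0, hγ1] at hFTC
  refine ⟨hFTC, ?_⟩
  -- pull dot product out of integral
  have hpull : ∫ τ in (0:ℝ)..1, gradH (γ τ) ⬝ᵥ (y₁ - y₀)
      = (∫ τ in (0:ℝ)..1, gradH (γ τ)) ⬝ᵥ (y₁ - y₀) := by
    simp only [dotProduct]
    rw [intervalIntegral.integral_finset_sum]
    · congr 1
      funext i
      rw [intervalIntegral.integral_mul_const]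
      congr 1
      have hint : IntervalIntegrable (fun τ => gradH (γ τ)) MeasureTheory.volume 0 1 :=
        hgradcont.intervalIntegrable 0 1
      have := ((ContinuousLinearMap.proj i : (Fin d → ℝ) →L[ℝ] ℝ).intervalIntegral_comp_comm
        hint)
      simpa using this
    · intro i _
      exact (((continuous_apply i).comp hgradcont).mul continuous_const).intervalIntegrable 0 1
  set v : Fin d → ℝ := ∫ τ in (0:ℝ)..1, gradH (γ τ) with hv
  have hdiff : y₁ - y₀ = h • (S *ᵥ v) := by
    rw [hAVF]; abel
  have hskew : v ⬝ᵥ (S *ᵥ v) = 0 := by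
    have h1 : v ⬝ᵥ (S *ᵥ v) = (Sᵀ *ᵥ v) ⬝ᵥ v := by
      rw [Matrix.dotProduct_mulVec, ← Matrix.mulVec_transpose]
    rw [hS] at h1
    have h2 : ((-S) *ᵥ v) ⬝ᵥ v = -(v ⬝ᵥ (S *ᵥ v)) := by
      rw [Matrix.neg_mulVec, neg_dotProduct, dotProduct_comm]
    linarith [h1, h2, h1.trans h2]
  have : H y₁ - H y₀ = 0 := by
    rw [hFTC, hpull, hdiff, dotProduct_smul, hskew, smul_zero]
  linarith
end

section
/- The modified AVF scheme y₁ = y₀ + S((y₁+y₀)/2) ∫₀¹ ∇H((1-τ)y₀ + τy₁) dτ, where S(z) is skew-symmetric for every z, preserves the energy: H(y₁) = H(y₀). -/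
open Matrix

theorem modified_avf_energy_preserving
    (d : ℕ) (S : (Fin d → ℝ) → Matrix (Fin d) (Fin d) ℝ)
    (hS : ∀ z, (S z)ᵀ = -(S z))
    (H : (Fin d → ℝ) → ℝ) (hH : ContDiff ℝ 1 H)
    (gradH : (Fin d → ℝ) → (Fin d → ℝ))
    (hgrad : ∀ x, gradH x = fun i => fderiv ℝ H x (Pi.single i 1))
    (y₀ y₁ : Fin d → ℝ)
    (hscheme : y₁ = y₀ + (S ((1/2 : ℝ) • (y₁ + y₀)) *ᵥ
      ∫ τ in (0:ℝ)..1, gradH ((1 - τ) • y₀ + τ • y₁))) :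
    H y₁ = H y₀ := by
  set p : ℝ → (Fin d → ℝ) := fun τ => (1 - τ) • y₀ + τ • y₁ with hp
  have hpcont : Continuous p := by fun_prop
  have hgradcont : Continuous gradH := by
    have : Continuous fun x => fderiv ℝ H x := hH.continuous_fderiv one_ne_zero
    have h2 : Continuous fun x => (fun i => fderiv ℝ H x (Pi.single i 1)) := by
      refine continuous_pi fun i => ?_
      exact (ContinuousLinearMap.apply ℝ ℝ (Pi.single i 1)).continuous.comp this
    convert h2 using 1
    funext x; exact hgrad x
  have hint : IntervalIntegrable (fun τ => gradH (p τ)) MeasureTheory.volume 0 1 :=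
    (hgradcont.comp hpcont).intervalIntegrable 0 1
  set v : Fin d → ℝ := ∫ τ in (0:ℝ)..1, gradH (p τ) with hv
  set m := (1/2 : ℝ) • (y₁ + y₀) with hm
  have hdiff : y₁ - y₀ = S m *ᵥ v := by
    rw [hscheme]; abel
  -- derivative of H ∘ p
  have hpath : ∀ τ : ℝ, HasDerivAt p (y₁ - y₀) τ := by
    intro τ
    have h1 : HasDerivAt (fun τ : ℝ => (1 - τ) • y₀) ((-1 : ℝ) • y₀) τ := by
      have := ((hasDerivAt_const τ (1:ℝ)).sub (hasDerivAt_id τ)).smul_const y₀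
      simpa using this
    have h2 : HasDerivAt (fun τ : ℝ => τ • y₁) ((1 : ℝ) • y₁) τ :=
      (hasDerivAt_id τ).smul_const y₁
    have := h1.add h2
    refine HasDerivAt.congr_deriv this ?_
    rw [neg_one_smul, one_smul, sub_eq_add_neg, add_comm]
  have hHd : ∀ x, HasFDerivAt H (fderiv ℝ H x) x := fun x =>
    (hH.differentiable one_ne_zero x).hasFDerivAt
  have hderiv : ∀ τ ∈ Set.uIcc (0:ℝ) 1,
      HasDerivAt (fun τ => H (p τ)) (fderiv ℝ H (p τ) (y₁ - y₀)) τ := fun τ _ =>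
    (hHd (p τ)).comp_hasDerivAt τ (hpath τ)
  have hdcont : Continuous fun τ => fderiv ℝ H (p τ) (y₁ - y₀) := by
    exact (ContinuousLinearMap.apply ℝ ℝ (y₁ - y₀)).continuous.comp
      ((hH.continuous_fderiv one_ne_zero).comp hpcont)
  have hftc : H (p 1) - H (p 0) =
      ∫ τ in (0:ℝ)..1, fderiv ℝ H (p τ) (y₁ - y₀) :=
    (intervalIntegral.integral_eq_sub_of_hasDerivAt hderiv
      (hdcont.intervalIntegrable 0 1)).symm
  have hp0 : p 0 = y₀ := by simp [hp]
  have hp1 : p 1 = y₁ := by simp [hp]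
  -- expand fderiv applied to vector as sum
  have hexp : ∀ x : Fin d → ℝ,
      fderiv ℝ H x (y₁ - y₀) = ∑ i, (y₁ - y₀) i * gradH x i := by
    intro x
    have hsum : (y₁ - y₀) = ∑ i, (y₁ - y₀) i • (Pi.single i (1:ℝ) : Fin d → ℝ) := by
      funext j
      simp [Finset.sum_apply, Pi.single_apply, eq_comm]
    conv_lhs => rw [hsum]
    rw [map_sum]
    refine Finset.sum_congr rfl fun i _ => ?_
    rw [(fderiv ℝ H x).map_smul, hgrad x]
    simp [smul_eq_mul]
  -- componentwise integral
  have hcomp : ∀ i, (∫ τ in (0:ℝ)..1, gradH (p τ) i) = v i := by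
    intro i
    have := (ContinuousLinearMap.proj (R := ℝ) (φ := fun _ : Fin d => ℝ) i
      ).intervalIntegral_comp_comm hint
    simpa using this
  have key : H y₁ - H y₀ = (y₁ - y₀) ⬝ᵥ v := by
    rw [hp0, hp1] at hftc
    rw [hftc]
    have : (∫ τ in (0:ℝ)..1, fderiv ℝ H (p τ) (y₁ - y₀)) =
        ∫ τ in (0:ℝ)..1, ∑ i, (y₁ - y₀) i * gradH (p τ) i := by
      congr 1; funext τ; exact hexp (p τ)
    rw [this, intervalIntegral.integral_finset_sum]
    · unfold dotProduct
      refine Finset.sum_congr rfl fun i _ => ?_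
      rw [intervalIntegral.integral_const_mul, hcomp i]
    · intro i _
      exact (continuous_const.mul
        ((continuous_apply i).comp (hgradcont.comp hpcont))).intervalIntegrable 0 1
  have hzero : (y₁ - y₀) ⬝ᵥ v = 0 := by
    rw [hdiff]
    have h1 : (S m *ᵥ v) ⬝ᵥ v = v ⬝ᵥ (S m *ᵥ v) := dotProduct_comm _ _
    have h2 : v ⬝ᵥ (S m *ᵥ v) = ((S m)ᵀ *ᵥ v) ⬝ᵥ v := by
      rw [dotProduct_mulVec, ← mulVec_transpose]
    rw [hS m] at h2
    have h3 : ((-(S m)) *ᵥ v) ⬝ᵥ v = -((S m *ᵥ v) ⬝ᵥ v) := by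
      simp [neg_mulVec]
    linarith [h1.trans (h2.trans h3)]
  have := key.trans hzero
  linarith
end
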